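/- With the notation of the twist-by-grading construction: let D be self-adjoint anticommuting with Γ, π₀ a representation commuting with Γ such that [D, π₀(a)] is bounded for all a ∈ A, π(a,a') := p₊π₀(a) + p₋π₀(a'), and ρ(a,a') := (a',a). Then for every (a,a') ∈ A ⊕ A the twisted commutator D π(a,a') − π(ρ(a,a')) D is bounded; in fact it equals p₊[D, π₀(a')]p₋ + p₋[D, π₀(a)]p₊. -/

import Mathlib

/-- The twist-by-grading representation `π(a,a') := p₊ π₀(a) + p₋ π₀(a')`,
with `p± := (1 ± Γ)/2`. -/
noncomputable def twistRep {H A : Type*} [NormedAddCommGroup H] [InnerProductSpace ℂ H]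
    [CompleteSpace H] [Ring A] [StarRing A] [Algebra ℂ A] [StarModule ℂ A]
    (Γ : H →L[ℂ] H) (π₀ : A →⋆ₐ[ℂ] (H →L[ℂ] H)) (p : A × A) : H →L[ℂ] H :=
  ((2 : ℂ)⁻¹ • (1 + Γ)) * π₀ p.1 + ((2 : ℂ)⁻¹ • (1 - Γ)) * π₀ p.2

/-- with `D` self-adjoint anticommuting with the grading `Γ`,
`π₀` commuting with `Γ` and having bounded commutators with `D`, the twisted
commutator `D π(a,a') − π(a',a) D` is bounded, and in fact equals
`p₊ [D, π₀(a')] p₋ + p₋ [D, π₀(a)] p₊`. -/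
theorem stmt13 {H A : Type*} [NormedAddCommGroup H] [InnerProductSpace ℂ H]
    [CompleteSpace H] [Ring A] [StarRing A] [Algebra ℂ A] [StarModule ℂ A]
    (Γ : H →L[ℂ] H) (hΓsa : IsSelfAdjoint Γ) (hΓ2 : Γ * Γ = 1)
    (D : H →ₗ[ℂ] H)
    (hsymD : ∀ x y : H, (inner ℂ (D x) y : ℂ) = inner ℂ x (D y))
    (hanti : ∀ x, D (Γ x) = - Γ (D x))
    (π₀ : A →⋆ₐ[ℂ] (H →L[ℂ] H)) (hcommΓ : ∀ a, Γ * π₀ a = π₀ a * Γ)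
    (hbd : ∀ a : A, ∃ T : H →L[ℂ] H, ∀ x, T x = D (π₀ a x) - π₀ a (D x)) :
    ∀ p : A × A,
      (∃ T : H →L[ℂ] H, ∀ x,
        T x = D (twistRep Γ π₀ p x) - twistRep Γ π₀ p.swap (D x))
      ∧ (∀ x, D (twistRep Γ π₀ p x) - twistRep Γ π₀ p.swap (D x)
          = ((2 : ℂ)⁻¹ • ((1 : H →L[ℂ] H) + Γ))
              (D (π₀ p.2 (((2 : ℂ)⁻¹ • ((1 : H →L[ℂ] H) - Γ)) x))
                - π₀ p.2 (D (((2 : ℂ)⁻¹ • ((1 : H →L[ℂ] H) - Γ)) x)))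
            + ((2 : ℂ)⁻¹ • ((1 : H →L[ℂ] H) - Γ))
              (D (π₀ p.1 (((2 : ℂ)⁻¹ • ((1 : H →L[ℂ] H) + Γ)) x))
                - π₀ p.1 (D (((2 : ℂ)⁻¹ • ((1 : H →L[ℂ] H) + Γ)) x)))) := by
  have hΓΓ : ∀ y : H, Γ (Γ y) = y := fun y => by
    have := congrArg (fun T : H →L[ℂ] H => T y) hΓ2
    simpa using this
  have hcomm : ∀ (a : A) (y : H), π₀ a (Γ y) = Γ (π₀ a y) := fun a y => by
    have := congrArg (fun T : H →L[ℂ] H => T y) (hcommΓ a)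
    simpa using this.symm
  intro p
  have key : ∀ x, D (twistRep Γ π₀ p x) - twistRep Γ π₀ p.swap (D x)
          = ((2 : ℂ)⁻¹ • ((1 : H →L[ℂ] H) + Γ))
              (D (π₀ p.2 (((2 : ℂ)⁻¹ • ((1 : H →L[ℂ] H) - Γ)) x))
                - π₀ p.2 (D (((2 : ℂ)⁻¹ • ((1 : H →L[ℂ] H) - Γ)) x)))
            + ((2 : ℂ)⁻¹ • ((1 : H →L[ℂ] H) - Γ))
              (D (π₀ p.1 (((2 : ℂ)⁻¹ • ((1 : H →L[ℂ] H) + Γ)) x))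
                - π₀ p.1 (D (((2 : ℂ)⁻¹ • ((1 : H →L[ℂ] H) + Γ)) x))) := by
    intro x
    simp only [twistRep, Prod.fst_swap, Prod.snd_swap,
      ContinuousLinearMap.add_apply, ContinuousLinearMap.sub_apply,
      ContinuousLinearMap.mul_apply, ContinuousLinearMap.smul_apply,
      ContinuousLinearMap.one_apply, map_add, map_sub, map_smul,
      hcomm, hanti, hΓΓ, map_neg, smul_neg]
    module
  obtain ⟨Te, hTe⟩ := hbd p.1
  obtain ⟨Tf, hTf⟩ := hbd p.2
  refine ⟨⟨((2 : ℂ)⁻¹ • (1 + Γ)) * Tf * ((2 : ℂ)⁻¹ • (1 - Γ))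
      + ((2 : ℂ)⁻¹ • (1 - Γ)) * Te * ((2 : ℂ)⁻¹ • (1 + Γ)), ?_⟩, key⟩
  intro x
  rw [key x]
  simp only [ContinuousLinearMap.add_apply, ContinuousLinearMap.mul_apply, hTe, hTf]
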